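/- arXiv:2304.14096 — 4 statements merged into one kernel-verified Lean document; each statement's English description precedes it below -/
import Mathlib

section
/- For every integer d ≥ 2 and every index 1 ≤ j ≤ d², the Recursive Block Basis element B_j^{(d)} is Hermitian and satisfies (B_j^{(d)})² = I_d; in particular each B_j^{(d)} is a Hermitian unitary matrix. -/
open Matrix

/-- The Pauli matrix `σ1`. -/
noncomputable def σ1 : Matrix (Fin 2) (Fin 2) ℂ := !![0, 1; 1, 0]

/-- The Pauli matrix `σ2`. -/
noncomputable def σ2 : Matrix (Fin 2) (Fin 2) ℂ := !![0, -Complex.I; Complex.I, 0]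

/-- The Pauli matrix `σ3`. -/
noncomputable def σ3 : Matrix (Fin 2) (Fin 2) ℂ := !![1, 0; 0, -1]

/-- Append a scalar diagonal entry at the bottom-right corner of a square matrix. -/
noncomputable def diagAppend {d : ℕ} (M : Matrix (Fin d) (Fin d) ℂ) (c : ℂ) :
    Matrix (Fin (d + 1)) (Fin (d + 1)) ℂ :=
  Matrix.reindex finSumFinEquiv finSumFinEquiv
    (Matrix.fromBlocks M 0 0 (Matrix.of fun _ _ => c))

/-- The matrix `diag(D, σ)` of size `d`, where `D` is the `(d-2) × (d-2)` diagonal matrix with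
`l`-th diagonal entry `(-1)^(l-1)` (for 1-based `l`) and `σ` is a `2 × 2` bottom-right block. -/
noncomputable def Dsig (d : ℕ) (σ : Matrix (Fin 2) (Fin 2) ℂ) : Matrix (Fin d) (Fin d) ℂ :=
  Matrix.of fun i j =>
    if (i : ℕ) < d - 2 ∨ (j : ℕ) < d - 2 then
      (if i = j ∧ (i : ℕ) < d - 2 then ((-1 : ℂ)) ^ (i : ℕ) else 0)
    else σ (if (i : ℕ) = d - 2 then 0 else 1) (if (j : ℕ) = d - 2 then 0 else 1)

/-- The `d × d` permutation matrix of the transposition exchanging the (1-based) positions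
`k` and `d - 1` (the identity matrix when `k = d - 1`). -/
noncomputable def Pswap (d k : ℕ) : Matrix (Fin d) (Fin d) ℂ :=
  Matrix.of fun i j =>
    if (i : ℕ) = k - 1 then (if (j : ℕ) = d - 2 then 1 else 0)
    else if (i : ℕ) = d - 2 then (if (j : ℕ) = k - 1 then 1 else 0)
    else (if i = j then 1 else 0)

/-- The RBB element with index `d^2 - 1`: `diag(I_{⌊d/2⌋+1}, -I_{⌊d/2⌋})` for odd `d`, and
`diag(I_{d/2-1}, -I_{d/2-1}, -σ3)` for even `d`. -/
noncomputable def lastDiag (d : ℕ) : Matrix (Fin d) (Fin d) ℂ :=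
  Matrix.diagonal fun i =>
    if d % 2 = 1 then (if (i : ℕ) < d / 2 + 1 then 1 else -1)
    else (if (i : ℕ) < d / 2 - 1 ∨ (i : ℕ) = d - 1 then 1 else -1)

/-- The Recursive Block Basis: `RBB d j` is the `d × d` matrix `B_j^{(d)}`, for the 1-based
index `1 ≤ j ≤ d^2`.  For `d = 2` it is the Pauli basis `σ1, σ2, σ3, I`; for `d > 2` it is
defined recursively from `RBB (d-1)`:
* `B_j^{(d)} = diag(B_j^{(d-1)}, (-1)^(d-1))` for `1 ≤ j ≤ (d-1)^2 - 1`;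
* `B_j^{(d)} = P_{(k,d-1)} ⬝ diag(D, σ1) ⬝ P_{(k,d-1)}` for `j = (d-1)^2 + (k-1)`, `1 ≤ k ≤ d-1`;
* `B_j^{(d)} = P_{(k,d-1)} ⬝ diag(D, σ2) ⬝ P_{(k,d-1)}` for `j = (d-1)^2 + (d-1) + (k-1)`,
  `1 ≤ k ≤ d-1`;
* `B_{d^2-1}^{(d)} = lastDiag d` and `B_{d^2}^{(d)} = I_d`. -/
noncomputable def RBB : (d : ℕ) → ℕ → Matrix (Fin d) (Fin d) ℂ
  | 0, _ => 1
  | 1, _ => 1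
  | 2, j => if j = 1 then σ1 else if j = 2 then σ2 else if j = 3 then σ3 else 1
  | (m + 3), j =>
      if j ≤ (m + 2) ^ 2 - 1 then diagAppend (RBB (m + 2) j) ((-1 : ℂ) ^ (m + 2))
      else if j ≤ (m + 2) ^ 2 + (m + 1) then
        Pswap (m + 3) (j - (m + 2) ^ 2 + 1) * Dsig (m + 3) σ1 *
          Pswap (m + 3) (j - (m + 2) ^ 2 + 1)
      else if j ≤ (m + 2) ^ 2 + 2 * (m + 2) - 1 then
        Pswap (m + 3) (j - (m + 2) ^ 2 - (m + 2) + 1) * Dsig (m + 3) σ2 *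
          Pswap (m + 3) (j - (m + 2) ^ 2 - (m + 2) + 1)
      else if j = (m + 3) ^ 2 - 1 then lastDiag (m + 3)
      else 1


lemma s1h : σ1ᴴ = σ1 := by ext i j; fin_cases i <;> fin_cases j <;> simp [σ1]
lemma s2h : σ2ᴴ = σ2 := by ext i j; fin_cases i <;> fin_cases j <;> simp [σ2]
lemma s3h : σ3ᴴ = σ3 := by ext i j; fin_cases i <;> fin_cases j <;> simp [σ3]
lemma s1sq : σ1 * σ1 = 1 := by simp [σ1, Matrix.mul_fin_two]; rw [Matrix.one_fin_two]
lemma s2sq : σ2 * σ2 = 1 := by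
  simp [σ2, Matrix.mul_fin_two, Complex.I_mul_I]; rw [Matrix.one_fin_two]
lemma s3sq : σ3 * σ3 = 1 := by simp [σ3, Matrix.mul_fin_two]; rw [Matrix.one_fin_two]

lemma pswap_eq (d k : ℕ) (hd : 2 ≤ d) (hk : k - 1 < d) :
    Pswap d k = (Equiv.swap (⟨k - 1, hk⟩ : Fin d) ⟨d - 2, by omega⟩).toPEquiv.toMatrix := by
  ext i j
  simp only [Pswap, of_apply, PEquiv.toMatrix_apply, Equiv.toPEquiv_apply, Option.mem_def,
    Option.some.injEq, Equiv.swap_apply_def, Fin.ext_iff]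
  split_ifs <;> simp_all <;> omega

lemma pswap_sq (d k : ℕ) (hd : 2 ≤ d) (hk : k - 1 < d) : Pswap d k * Pswap d k = 1 := by
  rw [pswap_eq d k hd hk, ← PEquiv.toMatrix_trans, ← Equiv.toPEquiv_trans, Equiv.swap_swap]
  exact PEquiv.toMatrix_refl

lemma pswap_herm (d k : ℕ) (hd : 2 ≤ d) (hk : k - 1 < d) : (Pswap d k)ᴴ = Pswap d k := by
  have ht : (Pswap d k)ᵀ = Pswap d k := by
    rw [pswap_eq d k hd hk, ← PEquiv.toMatrix_symm, ← Equiv.toPEquiv_symm, Equiv.symm_swap]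
  rw [conjTranspose, ht]
  ext i j
  simp only [map_apply, Pswap, of_apply]
  split_ifs <;> simp

lemma dsig_eq (n : ℕ) (σ : Matrix (Fin 2) (Fin 2) ℂ) :
    Dsig (n + 2) σ =
      (Matrix.fromBlocks (Matrix.diagonal fun i : Fin n => (-1 : ℂ) ^ (i : ℕ)) 0 0 σ).submatrix
        finSumFinEquiv.symm finSumFinEquiv.symm := by
  ext i j
  obtain ⟨i, rfl⟩ := finSumFinEquiv.surjective i
  obtain ⟨j, rfl⟩ := finSumFinEquiv.surjective j
  simp only [submatrix_apply, Equiv.symm_apply_apply]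
  rcases i with a | a <;> rcases j with b | b <;>
    simp only [Dsig, of_apply, fromBlocks_apply₁₁, fromBlocks_apply₁₂, fromBlocks_apply₂₁,
      fromBlocks_apply₂₂, finSumFinEquiv_apply_left, finSumFinEquiv_apply_right,
      Fin.coe_castAdd, Fin.coe_natAdd, diagonal_apply, Matrix.zero_apply]
  · have ha : (a : ℕ) < n + 2 - 2 := by omega
    rw [if_pos (Or.inl ha)]
    by_cases h : a = b
    · subst h; rw [if_pos ⟨rfl, ha⟩, if_pos rfl]
    · rw [if_neg, if_neg h]
      rintro ⟨h1, -⟩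
      exact h (by simpa [Fin.ext_iff] using h1)
  · rw [if_pos (Or.inl (by omega : (a : ℕ) < n + 2 - 2)), if_neg]
    rintro ⟨h1, -⟩
    have := congrArg Fin.val h1
    simp at this; omega
  · rw [if_pos (Or.inr (by omega : (b : ℕ) < n + 2 - 2)), if_neg]
    rintro ⟨h1, -⟩
    have := congrArg Fin.val h1
    simp at this; omega
  · rw [if_neg (by omega)]
    congr 1 <;>
    · fin_cases a <;> fin_cases b <;> simp <;> omega

lemma dsig_herm (n : ℕ) (σ : Matrix (Fin 2) (Fin 2) ℂ) (hσ : σᴴ = σ) :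
    (Dsig (n + 2) σ)ᴴ = Dsig (n + 2) σ := by
  have hs : (star fun i : Fin n => (-1 : ℂ) ^ (i : ℕ)) = fun i : Fin n => (-1 : ℂ) ^ (i : ℕ) := by
    funext i
    simp [Pi.star_apply]
  rw [dsig_eq, conjTranspose_submatrix, fromBlocks_conjTranspose, hσ, diagonal_conjTranspose, hs]
  simp

lemma dsig_sq (n : ℕ) (σ : Matrix (Fin 2) (Fin 2) ℂ) (hσ : σ * σ = 1) :
    Dsig (n + 2) σ * Dsig (n + 2) σ = 1 := by
  rw [dsig_eq, submatrix_mul_equiv, fromBlocks_multiply]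
  simp only [Matrix.mul_zero, Matrix.zero_mul, add_zero, zero_add, diagonal_mul_diagonal, hσ]
  have hf : (fun i : Fin n => (-1 : ℂ) ^ (i : ℕ) * (-1) ^ (i : ℕ)) = fun _ => (1 : ℂ) := by
    funext i; rw [← pow_add, ← two_mul, pow_mul]; norm_num
  rw [hf, Matrix.diagonal_one, fromBlocks_one, submatrix_one_equiv]

lemma lastDiag_herm (d : ℕ) : (lastDiag d)ᴴ = lastDiag d := by
  have hs : (star fun i : Fin d =>
      if d % 2 = 1 then (if (i : ℕ) < d / 2 + 1 then (1 : ℂ) else -1)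
      else (if (i : ℕ) < d / 2 - 1 ∨ (i : ℕ) = d - 1 then 1 else -1)) = fun i : Fin d =>
      if d % 2 = 1 then (if (i : ℕ) < d / 2 + 1 then (1 : ℂ) else -1)
      else (if (i : ℕ) < d / 2 - 1 ∨ (i : ℕ) = d - 1 then 1 else -1) := by
    funext i
    simp only [Pi.star_apply]
    split_ifs <;> simp
  rw [lastDiag, diagonal_conjTranspose, hs]

lemma lastDiag_sq (d : ℕ) : lastDiag d * lastDiag d = 1 := by
  ext i j
  rw [lastDiag, diagonal_mul_diagonal]
  by_cases h : i = j
  · subst h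
    simp only [diagonal_apply_eq, Pi.mul_apply, one_apply_eq]
    split_ifs <;> norm_num
  · rw [diagonal_apply_ne _ h, one_apply_ne h]

lemma diagAppend_herm {d : ℕ} (M : Matrix (Fin d) (Fin d) ℂ) (c : ℂ) (hM : Mᴴ = M)
    (hc : star c = c) : (diagAppend M c)ᴴ = diagAppend M c := by
  have h1 : (Matrix.of fun _ _ : Fin 1 => c)ᴴ = Matrix.of fun _ _ : Fin 1 => c := by
    ext i j; simp [conjTranspose_apply, hc]
  rw [diagAppend, reindex_apply, conjTranspose_submatrix, fromBlocks_conjTranspose, hM, h1]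
  simp

lemma diagAppend_sq {d : ℕ} (M : Matrix (Fin d) (Fin d) ℂ) (c : ℂ) (hM : M * M = 1)
    (hc : c * c = 1) : diagAppend M c * diagAppend M c = 1 := by
  have h1 : (Matrix.of fun _ _ : Fin 1 => c) * (Matrix.of fun _ _ : Fin 1 => c) = 1 := by
    ext i j
    fin_cases i; fin_cases j
    simp [Matrix.mul_apply, Fin.sum_univ_one, hc, Matrix.one_apply]
  rw [diagAppend, reindex_apply, submatrix_mul_equiv, fromBlocks_multiply]
  simp only [Matrix.mul_zero, Matrix.zero_mul, add_zero, zero_add, hM, h1]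
  rw [fromBlocks_one, submatrix_one_equiv]

lemma sandwich {n : ℕ} (P A : Matrix (Fin n) (Fin n) ℂ) (hP : Pᴴ = P) (hP2 : P * P = 1)
    (hA : Aᴴ = A) (hA2 : A * A = 1) :
    (P * A * P)ᴴ = P * A * P ∧ (P * A * P) * (P * A * P) = 1 := by
  constructor
  · rw [conjTranspose_mul, conjTranspose_mul, hP, hA, Matrix.mul_assoc]
  · calc P * A * P * (P * A * P) = P * A * (P * P) * A * P := by
          simp only [Matrix.mul_assoc]
      _ = 1 := by rw [hP2, Matrix.mul_one, Matrix.mul_assoc P A A, hA2, Matrix.mul_one, hP2]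

lemma rbb_key : ∀ m : ℕ, ∀ j : ℕ, 1 ≤ j → j ≤ (m + 2) ^ 2 →
    (RBB (m + 2) j)ᴴ = RBB (m + 2) j ∧ RBB (m + 2) j * RBB (m + 2) j = 1 := by
  intro m
  induction m with
  | zero =>
    intro j hj1 hj2
    have hj4 : j ≤ 4 := by simpa using hj2
    interval_cases j
    · rw [show RBB 2 1 = σ1 from rfl]; exact ⟨s1h, s1sq⟩
    · rw [show RBB 2 2 = σ2 from rfl]; exact ⟨s2h, s2sq⟩
    · rw [show RBB 2 3 = σ3 from rfl]; exact ⟨s3h, s3sq⟩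
    · rw [show RBB 2 4 = 1 from rfl]; exact ⟨Matrix.conjTranspose_one, one_mul 1⟩
  | succ n ih =>
    intro j hj1 hj2
    have hd3 : 2 ≤ n + 3 := by omega
    have hRBB : RBB (n + 3) j =
        if j ≤ (n + 2) ^ 2 - 1 then diagAppend (RBB (n + 2) j) ((-1 : ℂ) ^ (n + 2))
        else if j ≤ (n + 2) ^ 2 + (n + 1) then
          Pswap (n + 3) (j - (n + 2) ^ 2 + 1) * Dsig (n + 3) σ1 *
            Pswap (n + 3) (j - (n + 2) ^ 2 + 1)
        else if j ≤ (n + 2) ^ 2 + 2 * (n + 2) - 1 then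
          Pswap (n + 3) (j - (n + 2) ^ 2 - (n + 2) + 1) * Dsig (n + 3) σ2 *
            Pswap (n + 3) (j - (n + 2) ^ 2 - (n + 2) + 1)
        else if j = (n + 3) ^ 2 - 1 then lastDiag (n + 3)
        else 1 := rfl
    rw [show (n : ℕ) + 1 + 2 = n + 3 from rfl, hRBB]
    by_cases h1 : j ≤ (n + 2) ^ 2 - 1
    · rw [if_pos h1]
      obtain ⟨ha, hb⟩ := ih j hj1 (le_trans h1 (Nat.sub_le _ _))
      refine ⟨diagAppend_herm _ _ ha ?_, diagAppend_sq _ _ hb ?_⟩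
      · simp
      · rw [← mul_pow]; norm_num
    rw [if_neg h1]
    by_cases h2 : j ≤ (n + 2) ^ 2 + (n + 1)
    · rw [if_pos h2]
      have hk : (j - (n + 2) ^ 2 + 1) - 1 < n + 3 := by
        have := Nat.sub_le_iff_le_add.mpr h2
        omega
      exact sandwich _ _ (pswap_herm _ _ hd3 hk) (pswap_sq _ _ hd3 hk)
        (dsig_herm (n + 1) σ1 s1h) (dsig_sq (n + 1) σ1 s1sq)
    rw [if_neg h2]
    by_cases h3 : j ≤ (n + 2) ^ 2 + 2 * (n + 2) - 1
    · rw [if_pos h3]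
      have hk : (j - (n + 2) ^ 2 - (n + 2) + 1) - 1 < n + 3 := by
        have h3' : j ≤ (n + 2) ^ 2 + (2 * (n + 2) - 1) := by omega
        have := Nat.sub_le_iff_le_add.mpr h3'
        omega
      exact sandwich _ _ (pswap_herm _ _ hd3 hk) (pswap_sq _ _ hd3 hk)
        (dsig_herm (n + 1) σ2 s2h) (dsig_sq (n + 1) σ2 s2sq)
    rw [if_neg h3]
    by_cases h4 : j = (n + 3) ^ 2 - 1
    · rw [if_pos h4]
      exact ⟨lastDiag_herm _, lastDiag_sq _⟩
    · rw [if_neg h4]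
      exact ⟨Matrix.conjTranspose_one, one_mul 1⟩

/-- For every `d ≥ 2` and every `1 ≤ j ≤ d^2`, the Recursive Block Basis
element `B_j^{(d)}` is Hermitian and squares to the identity; in particular it is a Hermitian
unitary matrix. -/
theorem rbb_hermitian_unitary (d : ℕ) (hd : 2 ≤ d) (j : ℕ) (hj1 : 1 ≤ j) (hj2 : j ≤ d ^ 2) :
    (RBB d j).IsHermitian ∧ RBB d j * RBB d j = 1 ∧
      RBB d j ∈ Matrix.unitaryGroup (Fin d) ℂ := by
  obtain ⟨m, rfl⟩ : ∃ m, d = m + 2 := ⟨d - 2, by omega⟩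
  obtain ⟨h1, h2⟩ := rbb_key m j hj1 hj2
  refine ⟨h1, h2, ?_⟩
  rw [Matrix.mem_unitaryGroup_iff, Matrix.star_eq_conjTranspose, h1]
  exact h2
end

section
/- For every integer d ≥ 2 and every index 1 ≤ j ≤ d²−1, the trace of the Recursive Block Basis element B_j^{(d)} equals 0 if d is even, and equals 1 if d is odd. -/
open Matrix

/-! ### Auxiliary lemmas -/

lemma rbb_trace_submatrix_equiv {d : ℕ} (M : Matrix (Fin d) (Fin d) ℂ) (e : Fin d ≃ Fin d) :
    (M.submatrix e e).trace = M.trace :=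
  Fintype.sum_equiv e _ _ (fun _ => rfl)

lemma rbb_trace_diagAppend {d : ℕ} (M : Matrix (Fin d) (Fin d) ℂ) (c : ℂ) :
    (diagAppend M c).trace = M.trace + c := by
  unfold diagAppend
  rw [Matrix.reindex_apply]
  rw [show ((Matrix.fromBlocks M 0 0 (Matrix.of fun _ _ => c)).submatrix
      finSumFinEquiv.symm finSumFinEquiv.symm).trace
    = (Matrix.fromBlocks M 0 0 (Matrix.of fun _ _ => c)).trace from
    Fintype.sum_equiv finSumFinEquiv.symm _ _ (fun _ => rfl)]
  simp [Matrix.trace, Matrix.diag, Fintype.sum_sum_type, Matrix.fromBlocks]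

lemma rbb_trace_conj {d : ℕ} (M : Matrix (Fin d) (Fin d) ℂ) (e : Fin d ≃ Fin d)
    (he : e.symm = e) :
    ((1 : Matrix (Fin d) (Fin d) ℂ).submatrix e id * M *
      (1 : Matrix (Fin d) (Fin d) ℂ).submatrix e id).trace = M.trace := by
  rw [Matrix.mul_submatrix_one]
  rw [show (id : Fin d → Fin d) = ⇑(Equiv.refl (Fin d)) from rfl]
  rw [Matrix.one_submatrix_mul]
  simp only [Matrix.submatrix_submatrix, he]
  simpa using rbb_trace_submatrix_equiv M e

lemma rbb_pswap_eq (d k : ℕ) (hd : 2 ≤ d) (hk : k - 1 < d) :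
    Pswap d k = (1 : Matrix (Fin d) (Fin d) ℂ).submatrix
      (Equiv.swap (⟨k - 1, hk⟩ : Fin d) ⟨d - 2, by omega⟩) id := by
  ext i j
  simp only [Pswap, Matrix.of_apply, Matrix.submatrix_apply, Matrix.one_apply, id]
  rcases eq_or_ne (i : ℕ) (k - 1) with h1 | h1
  · have : i = (⟨k - 1, hk⟩ : Fin d) := Fin.ext h1
    rw [this]
    rw [if_pos rfl, Equiv.swap_apply_left]
    by_cases h : (j : ℕ) = d - 2
    · rw [if_pos h, if_pos (Fin.ext h.symm)]
    · rw [if_neg h, if_neg (fun hh => h (congrArg Fin.val hh.symm))]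
  · rw [if_neg h1]
    rcases eq_or_ne (i : ℕ) (d - 2) with h2 | h2
    · have : i = (⟨d - 2, by omega⟩ : Fin d) := Fin.ext h2
      rw [this]
      rw [if_pos rfl, Equiv.swap_apply_right]
      by_cases h : (j : ℕ) = k - 1
      · rw [if_pos h, if_pos (Fin.ext h.symm)]
      · rw [if_neg h, if_neg (fun hh => h (congrArg Fin.val hh.symm))]
    · rw [if_neg h2, Equiv.swap_apply_of_ne_of_ne
        (fun hh => h1 (congrArg Fin.val hh)) (fun hh => h2 (congrArg Fin.val hh))]

lemma rbb_sum_ite_lt (d c : ℕ) (hc : c ≤ d) (f : ℕ → ℂ) :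
    (∑ i : Fin d, if (i : ℕ) < c then f i else 0) = ∑ i ∈ Finset.range c, f i := by
  rw [Fin.sum_univ_eq_sum_range (fun i => if i < c then f i else 0)]
  rw [← Finset.sum_subset (Finset.range_subset_range.2 hc)
    (fun x _ hx => by simp at hx; simp [hx])]
  exact Finset.sum_congr rfl (fun x hx => by simp at hx; simp [hx])

lemma rbb_sum_boole_lt (d c : ℕ) (hc : c ≤ d) :
    (∑ i : Fin d, if (i : ℕ) < c then (1 : ℂ) else 0) = c := by
  rw [rbb_sum_ite_lt d c hc (fun _ => 1)]; simp

lemma rbb_sum_boole_eq (d c : ℕ) (hc : c < d) :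
    (∑ i : Fin d, if (i : ℕ) = c then (1 : ℂ) else 0) = 1 := by
  have : ∀ i : Fin d, (if (i : ℕ) = c then (1:ℂ) else 0)
      = if i = (⟨c, hc⟩ : Fin d) then 1 else 0 := by
    intro i; simp [Fin.ext_iff]
  rw [Finset.sum_congr rfl (fun i _ => this i), Finset.sum_ite_eq' Finset.univ]
  simp

lemma rbb_trace_Dsig (d : ℕ) (hd : 2 ≤ d) (σ : Matrix (Fin 2) (Fin 2) ℂ)
    (h0 : σ 0 0 = 0) (h1 : σ 1 1 = 0) :
    (Dsig d σ).trace = if Even d then 0 else 1 := by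
  have key : (Dsig d σ).trace
      = ∑ i : Fin d, if (i : ℕ) < d - 2 then (-1 : ℂ) ^ (i : ℕ) else 0 := by
    apply Finset.sum_congr rfl
    intro i _
    simp only [Matrix.diag, Dsig, Matrix.of_apply]
    by_cases h : (i : ℕ) < d - 2
    · simp [h]
    · simp only [h, or_self, if_false, if_neg h]
      by_cases h2 : (i : ℕ) = d - 2 <;> simp [h2, h0, h1]
  rw [key, rbb_sum_ite_lt d (d - 2) (by omega) (fun i => (-1 : ℂ) ^ i), neg_one_geom_sum]
  have : Even (d - 2) ↔ Even d := by
    rw [Nat.even_sub hd]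
    simp
  simp [this]

lemma rbb_trace_lastDiag (d : ℕ) (hd : 2 ≤ d) :
    (lastDiag d).trace = if Even d then 0 else 1 := by
  rw [lastDiag, Matrix.trace_diagonal]
  rcases Nat.even_or_odd d with he | ho
  · have h2 : d % 2 = 0 := Nat.even_iff.mp he
    rw [if_pos he]
    have key : ∀ i : Fin d, (if d % 2 = 1 then (if (i : ℕ) < d / 2 + 1 then (1:ℂ) else -1)
        else (if (i : ℕ) < d / 2 - 1 ∨ (i : ℕ) = d - 1 then 1 else -1))
        = 2 * ((if (i : ℕ) < d / 2 - 1 then 1 else 0)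
            + (if (i : ℕ) = d - 1 then 1 else 0)) - 1 := by
      intro i
      rw [if_neg (by omega)]
      have hi := i.isLt
      by_cases ha : (i : ℕ) < d / 2 - 1
      · rw [if_pos (Or.inl ha), if_pos ha, if_neg (by omega)]; ring
      · by_cases hb : (i : ℕ) = d - 1
        · rw [if_pos (Or.inr hb), if_neg ha, if_pos hb]; ring
        · rw [if_neg (by tauto), if_neg ha, if_neg hb]; ring
    rw [Finset.sum_congr rfl (fun i _ => key i)]
    rw [Finset.sum_sub_distrib, ← Finset.mul_sum, Finset.sum_add_distrib]
    rw [rbb_sum_boole_lt d (d / 2 - 1) (by omega), rbb_sum_boole_eq d (d - 1) (by omega)]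
    simp only [Finset.sum_const, Finset.card_univ, Fintype.card_fin, nsmul_eq_mul, mul_one]
    have hnat : 2 * (d / 2 - 1 + 1) = d := by omega
    have hC := congrArg (fun n : ℕ => (n : ℂ)) hnat
    push_cast at hC
    linear_combination hC
  · have h2 : d % 2 = 1 := Nat.odd_iff.mp ho
    rw [if_neg (by simp [Nat.even_iff, h2])]
    have key : ∀ i : Fin d, (if d % 2 = 1 then (if (i : ℕ) < d / 2 + 1 then (1:ℂ) else -1)
        else (if (i : ℕ) < d / 2 - 1 ∨ (i : ℕ) = d - 1 then 1 else -1))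
        = 2 * (if (i : ℕ) < d / 2 + 1 then 1 else 0) - 1 := by
      intro i
      rw [if_pos h2]
      by_cases ha : (i : ℕ) < d / 2 + 1
      · rw [if_pos ha, if_pos ha]; ring
      · rw [if_neg ha, if_neg ha]; ring
    rw [Finset.sum_congr rfl (fun i _ => key i)]
    rw [Finset.sum_sub_distrib, ← Finset.mul_sum]
    rw [rbb_sum_boole_lt d (d / 2 + 1) (by omega)]
    simp only [Finset.sum_const, Finset.card_univ, Fintype.card_fin, nsmul_eq_mul, mul_one]
    have hnat : 2 * (d / 2 + 1) = d + 1 := by omega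
    have hC := congrArg (fun n : ℕ => (n : ℂ)) hnat
    push_cast at hC
    push_cast
    linear_combination hC

lemma rbb_trace_pswap_conj (d k : ℕ) (hd : 2 ≤ d) (hk : k - 1 < d)
    (M : Matrix (Fin d) (Fin d) ℂ) :
    (Pswap d k * M * Pswap d k).trace = M.trace := by
  rw [rbb_pswap_eq d k hd hk]
  exact rbb_trace_conj M _ (Equiv.symm_swap _ _)

/-- For every `d ≥ 2` and every `1 ≤ j ≤ d^2 - 1`, the trace of `B_j^{(d)}`
is `0` if `d` is even and `1` if `d` is odd. -/
theorem rbb_trace (d : ℕ) (hd : 2 ≤ d) (j : ℕ) (hj1 : 1 ≤ j) (hj2 : j ≤ d ^ 2 - 1) :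
    (RBB d j).trace = if Even d then 0 else 1 := by
  induction d using Nat.strong_induction_on generalizing j with
  | _ d ih =>
    match d, hd with
    | 2, _ =>
      have hj : j = 1 ∨ j = 2 ∨ j = 3 := by omega
      rcases hj with h | h | h <;> subst h <;>
        simp [RBB, σ1, σ2, σ3, Matrix.trace, Matrix.diag, Fin.sum_univ_two]
    | (m + 3), _ =>
      simp only [RBB]
      by_cases hA : j ≤ (m + 2) ^ 2 - 1
      · rw [if_pos hA, rbb_trace_diagAppend,
          ih (m + 2) (by omega) (by omega) j hj1 hA]
        rcases Nat.even_or_odd m with he | ho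
        · have h1 : Even (m + 2) := by
            rcases he with ⟨r, hr⟩; exact ⟨r + 1, by omega⟩
          have h2 : ¬ Even (m + 3) := by
            simp [Nat.even_iff] at h1 ⊢; omega
          rw [if_pos h1, if_neg h2, Even.neg_one_pow h1]; ring
        · have h1 : ¬ Even (m + 2) := by
            simp [Nat.even_iff, Nat.odd_iff] at ho ⊢; omega
          have h2 : Even (m + 3) := by
            simp [Nat.even_iff, Nat.odd_iff] at ho ⊢; omega
          rw [if_neg h1, if_pos h2, Odd.neg_one_pow (Nat.odd_iff.mpr (by
            simp [Nat.even_iff, Nat.odd_iff] at h1 ⊢; omega))]; ring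
      · rw [if_neg hA]
        by_cases hB : j ≤ (m + 2) ^ 2 + (m + 1)
        · rw [if_pos hB, rbb_trace_pswap_conj (m + 3) _ (by omega) (by omega)]
          exact rbb_trace_Dsig (m + 3) (by omega) σ1 (by simp [σ1]) (by simp [σ1])
        · rw [if_neg hB]
          by_cases hC : j ≤ (m + 2) ^ 2 + 2 * (m + 2) - 1
          · rw [if_pos hC, rbb_trace_pswap_conj (m + 3) _ (by omega) (by omega)]
            exact rbb_trace_Dsig (m + 3) (by omega) σ2 (by simp [σ2]) (by simp [σ2])
          · rw [if_neg hC]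
            have hD : j = (m + 3) ^ 2 - 1 := by
              have h1 : (m + 2) ^ 2 + 2 * (m + 2) - 1 = m ^ 2 + 6 * m + 7 := by ring_nf; omega
              have h2 : (m + 3) ^ 2 - 1 = m ^ 2 + 6 * m + 8 := by ring_nf; omega
              omega
            rw [if_pos hD]
            exact rbb_trace_lastDiag (m + 3) (by omega)
end

section
/- Let n ≥ 2, m = 2^{n−2}, and let R denote either R_Y or R_Z. For θ = (θ_1,…,θ_m) ∈ ℝ^m write F(θ) = blockdiag(R(θ_1),…,R(θ_m)), a 2^{n−1} × 2^{n−1} matrix. Let C be the 2^n × 2^n block matrix with diagonal blocks I_{2^{n−1}} and I_{2^{n−2}} ⊗ σ1 and zero off-diagonal blocks (the CNOT gate with control on the first qubit and target on the last qubit). Then for all θ, φ ∈ ℝ^m, C · (I_2 ⊗ F(φ)) · C · (I_2 ⊗ F(θ)) = blockdiag(R(ψ_1),…,R(ψ_{2m})), where ψ_j = θ_j + φ_j and ψ_{m+j} = θ_j − φ_j for 1 ≤ j ≤ m. -/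
open Matrix

/-- The rotation gate `R_Z(θ) = diag(e^{iθ}, e^{-iθ})`. -/
noncomputable def RZ (θ : ℝ) : Matrix (Fin 2) (Fin 2) ℂ :=
  !![Complex.exp (Complex.I * θ), 0; 0, Complex.exp (-(Complex.I * θ))]

/-- The rotation gate `R_Y(θ) = !![cos θ, sin θ; -sin θ, cos θ]`. -/
noncomputable def RY (θ : ℝ) : Matrix (Fin 2) (Fin 2) ℂ :=
  !![(Real.cos θ : ℂ), (Real.sin θ : ℂ); -(Real.sin θ : ℂ), (Real.cos θ : ℂ)]

/-- The generic `2 × 2` special unitary matrix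
`U(α,β,γ) = !![e^{i(α+β)} cos γ, e^{i(α-β)} sin γ; -e^{-i(α-β)} sin γ, e^{-i(α+β)} cos γ]`. -/
noncomputable def Umat (α β γ : ℝ) : Matrix (Fin 2) (Fin 2) ℂ :=
  !![Complex.exp (Complex.I * (α + β)) * Real.cos γ,
      Complex.exp (Complex.I * (α - β)) * Real.sin γ;
    -(Complex.exp (-(Complex.I * (α - β))) * Real.sin γ),
      Complex.exp (-(Complex.I * (α + β))) * Real.cos γ]

/-- `blockDiag2 m M` is the `2m × 2m` block-diagonal matrix with the 2×2 diagonal blocks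
`M 0, M 1, …, M (m-1)`. -/
noncomputable def blockDiag2 (m : ℕ) (M : ℕ → Matrix (Fin 2) (Fin 2) ℂ) :
    Matrix (Fin (m * 2)) (Fin (m * 2)) ℂ :=
  Matrix.of fun i j =>
    if (i : ℕ) / 2 = (j : ℕ) / 2 then
      M ((i : ℕ) / 2) ⟨(i : ℕ) % 2, by omega⟩ ⟨(j : ℕ) % 2, by omega⟩
    else 0

/-- Kronecker product `A ⊗ B` with a `2 × 2` first factor, realized on `Fin (k * 2)`. -/
noncomputable def kronFirst {k : ℕ} (A : Matrix (Fin 2) (Fin 2) ℂ)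
    (B : Matrix (Fin k) (Fin k) ℂ) : Matrix (Fin (k * 2)) (Fin (k * 2)) ℂ :=
  Matrix.of fun i j =>
    A ⟨(i : ℕ) / k, Nat.div_lt_of_lt_mul i.2⟩ ⟨(j : ℕ) / k, Nat.div_lt_of_lt_mul j.2⟩ *
      B ⟨(i : ℕ) % k, Nat.mod_lt _ (by have := i.2; omega)⟩
        ⟨(j : ℕ) % k, Nat.mod_lt _ (by have := j.2; omega)⟩

/-- The `4m × 4m` CNOT gate with control on the first qubit and target on the last qubit:
the block matrix with diagonal blocks `I_{2m}` and `I_m ⊗ σ1` and zero off-diagonal blocks. -/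
noncomputable def CNOTfl (m : ℕ) : Matrix (Fin (m * 2 * 2)) (Fin (m * 2 * 2)) ℂ :=
  Matrix.of fun i j =>
    if (i : ℕ) < m * 2 then (if (i : ℕ) = (j : ℕ) then 1 else 0)
    else (if (j : ℕ) = (((i : ℕ) - m * 2) ^^^ 1) + m * 2 then 1 else 0)


section Aux

lemma xor_one (x : ℕ) : x ^^^ 1 = 2 * (x / 2) + (1 - x % 2) := by
  have h := Nat.div_add_mod x 2
  have h1 : (1:ℕ) = Nat.bit true 0 := rfl
  rcases Nat.even_or_odd x with ⟨k, hk⟩ | ⟨k, hk⟩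
  · have hx : x = Nat.bit false k := by simp only [Nat.bit, cond]; omega
    rw [hx, h1, Nat.xor_bit]
    have : bne false true = true := rfl
    rw [this]
    simp only [Nat.bit, cond, Nat.xor_zero]
    simp only [hx, Nat.bit, cond] at h ⊢
    omega
  · have hx : x = Nat.bit true k := by simp only [Nat.bit, cond]; omega
    rw [hx, h1, Nat.xor_bit]
    have : bne true true = false := rfl
    rw [this]
    simp only [Nat.bit, cond, Nat.xor_zero]
    simp only [hx, Nat.bit, cond] at h ⊢
    omega

def cperm (m : ℕ) (i : Fin (m*2*2)) : Fin (m*2*2) :=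
  ⟨if (i:ℕ) < m*2 then (i:ℕ) else (((i:ℕ) - m*2) ^^^ 1) + m*2, by
    have h2 := i.2
    split
    · omega
    · rw [xor_one]; omega⟩

lemma cperm_div (m : ℕ) (i : Fin (m*2*2)) : (cperm m i : ℕ) / 2 = (i:ℕ) / 2 := by
  show (if (i:ℕ) < m*2 then (i:ℕ) else (((i:ℕ) - m*2) ^^^ 1) + m*2) / 2 = (i:ℕ) / 2
  split
  · rfl
  · rw [xor_one]; have := i.2; omega

lemma cperm_mod (m : ℕ) (i : Fin (m*2*2)) :
    (cperm m i : ℕ) % 2 = if (i:ℕ) < m*2 then (i:ℕ) % 2 else 1 - (i:ℕ) % 2 := by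
  show (if (i:ℕ) < m*2 then (i:ℕ) else (((i:ℕ) - m*2) ^^^ 1) + m*2) % 2 = _
  split
  · rfl
  · rw [xor_one]; have := i.2; omega

lemma cperm_invol (m : ℕ) (i : Fin (m*2*2)) : cperm m (cperm m i) = i := by
  apply Fin.ext
  show (if ((cperm m i : ℕ)) < m*2 then ((cperm m i : ℕ))
      else (((cperm m i : ℕ) - m*2) ^^^ 1) + m*2) = (i : ℕ)
  have h2 := i.2
  by_cases h : (i:ℕ) < m*2
  · have : (cperm m i : ℕ) = (i:ℕ) := by simp [cperm, h]
    rw [this, if_pos h]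
  · have hv : (cperm m i : ℕ) = (((i:ℕ) - m*2) ^^^ 1) + m*2 := by simp [cperm, h]
    rw [hv]
    rw [if_neg (by rw [xor_one]; omega)]
    rw [Nat.add_sub_cancel, Nat.xor_xor_cancel_right]
    omega

lemma cnot_apply (m : ℕ) (i k : Fin (m*2*2)) :
    CNOTfl m i k = if k = cperm m i then 1 else 0 := by
  simp only [CNOTfl, Matrix.of_apply, cperm, Fin.ext_iff]
  split
  · simp [eq_comm]
  · rfl

lemma cnot_mul (m : ℕ) (M : Matrix (Fin (m*2*2)) (Fin (m*2*2)) ℂ) :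
    CNOTfl m * M = Matrix.of fun i j => M (cperm m i) j := by
  ext i j
  rw [Matrix.mul_apply]
  simp only [cnot_apply, Matrix.of_apply, ite_mul, one_mul, zero_mul]
  rw [Finset.sum_ite_eq' (Finset.univ) (cperm m i) (fun k => M k j)]
  simp

lemma mul_cnot (m : ℕ) (M : Matrix (Fin (m*2*2)) (Fin (m*2*2)) ℂ) :
    M * CNOTfl m = Matrix.of fun i j => M i (cperm m j) := by
  ext i j
  rw [Matrix.mul_apply]
  have hc : ∀ k : Fin (m*2*2), CNOTfl m k j = if k = cperm m j then 1 else 0 := by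
    intro k
    rw [cnot_apply]
    congr 1
    apply propext
    constructor
    · intro h; rw [h, cperm_invol]
    · intro h; rw [h, cperm_invol]
  simp only [hc, mul_ite, mul_one, mul_zero]
  rw [Finset.sum_ite_eq' (Finset.univ) (cperm m j) (fun k => M i k)]
  simp

lemma blockDiag2_congr (k : ℕ) (M N : ℕ → Matrix (Fin 2) (Fin 2) ℂ)
    (h : ∀ q < k, M q = N q) : blockDiag2 k M = blockDiag2 k N := by
  ext i j
  simp only [blockDiag2, Matrix.of_apply]
  split
  · rw [h ((i:ℕ)/2) (by have := i.2; omega)]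
  · rfl

lemma blockDiag2_mul (k : ℕ) (M N : ℕ → Matrix (Fin 2) (Fin 2) ℂ) :
    blockDiag2 k M * blockDiag2 k N = blockDiag2 k fun j => M j * N j := by
  ext i j
  rw [Matrix.mul_apply]
  have hik : (i:ℕ)/2 < k := by have := i.2; omega
  set t0 : Fin (k*2) := ⟨2*((i:ℕ)/2), by omega⟩ with ht0
  set t1 : Fin (k*2) := ⟨2*((i:ℕ)/2)+1, by omega⟩ with ht1
  have hne : t0 ≠ t1 := by simp [Fin.ext_iff, ht0, ht1]
  have hsub : ∀ t : Fin (k*2), t ∉ ({t0, t1} : Finset (Fin (k*2))) →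
      blockDiag2 k M i t * blockDiag2 k N t j = 0 := by
    intro t ht
    simp only [Finset.mem_insert, Finset.mem_singleton, Fin.ext_iff, ht0, ht1] at ht
    have hdt : (t:ℕ)/2 ≠ (i:ℕ)/2 := by omega
    simp only [blockDiag2, Matrix.of_apply]
    rw [if_neg (fun h => hdt h.symm), zero_mul]
  rw [← Finset.sum_subset (Finset.subset_univ {t0, t1}) (fun t _ ht => hsub t ht)]
  rw [Finset.sum_pair hne]
  simp only [blockDiag2, Matrix.of_apply, ht0, ht1]
  have e0 : (2*((i:ℕ)/2)) / 2 = (i:ℕ)/2 := by omega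
  have e0m : (2*((i:ℕ)/2)) % 2 = 0 := by omega
  have e1 : (2*((i:ℕ)/2)+1) / 2 = (i:ℕ)/2 := by omega
  have e1m : (2*((i:ℕ)/2)+1) % 2 = 1 := by omega
  simp only [e0, e0m, e1, e1m]
  by_cases h : (i:ℕ)/2 = (j:ℕ)/2
  · simp only [h, if_true, eq_self_iff_true, if_pos]
    rw [Matrix.mul_apply, Fin.sum_univ_two]
    rfl
  · simp only [if_neg h, if_true]
    ring

lemma kron_eq (m : ℕ) (M : ℕ → Matrix (Fin 2) (Fin 2) ℂ) :
    kronFirst 1 (blockDiag2 m M) = blockDiag2 (m*2) (fun j => M (j % m)) := by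
  ext i j
  simp only [kronFirst, blockDiag2, Matrix.of_apply, Matrix.one_apply, Fin.mk.injEq]
  have f1 : ∀ a : ℕ, (a % (m*2))/2 = (a/2) % m := fun a => by
    rw [mul_comm m 2]; exact Nat.mod_mul_right_div_self a 2 m
  have f2 : ∀ a : ℕ, a/(m*2) = a/2/m := fun a => by
    rw [mul_comm m 2, ← Nat.div_div_eq_div_mul]
  have f3 : ∀ a : ℕ, (a % (m*2))%2 = a%2 := fun a => Nat.mod_mod_of_dvd a ⟨m, by ring⟩
  by_cases h : (i:ℕ)/2 = (j:ℕ)/2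
  · have h1 : (i:ℕ)/(m*2) = (j:ℕ)/(m*2) := by rw [f2, f2, h]
    have h2 : ((i:ℕ)%(m*2))/2 = ((j:ℕ)%(m*2))/2 := by rw [f1, f1, h]
    rw [if_pos h1, if_pos h2, if_pos h, one_mul]
    simp only [f1, f3]
  · rw [if_neg h]
    by_cases h1 : (i:ℕ)/(m*2) = (j:ℕ)/(m*2)
    · have h2 : ((i:ℕ)%(m*2))/2 ≠ ((j:ℕ)%(m*2))/2 := by
        rw [f1, f1]
        intro he
        apply h
        have hi := (Nat.div_add_mod ((i:ℕ)/2) m).symm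
        have hj := (Nat.div_add_mod ((j:ℕ)/2) m).symm
        rw [f2, f2] at h1
        rw [hi, hj, h1, he]
      rw [if_neg h2, mul_zero]
    · rw [if_neg h1, zero_mul]

lemma sigma_conj (X : Matrix (Fin 2) (Fin 2) ℂ) :
    !![(0:ℂ),1;1,0] * X * !![(0:ℂ),1;1,0] = !![X 1 1, X 1 0; X 0 1, X 0 0] := by
  ext a b
  fin_cases a <;> fin_cases b <;>
    simp [Matrix.mul_apply, Fin.sum_univ_two, Matrix.vecMul, Matrix.vecHead,
      Matrix.vecTail, dotProduct]

lemma cnot_conj (m : ℕ) (G : ℕ → Matrix (Fin 2) (Fin 2) ℂ) :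
    CNOTfl m * blockDiag2 (m*2) G * CNOTfl m =
      blockDiag2 (m*2) (fun q => if q < m then G q
        else !![(0:ℂ),1;1,0] * G q * !![(0:ℂ),1;1,0]) := by
  rw [Matrix.mul_assoc, mul_cnot, cnot_mul]
  ext i j
  simp only [Matrix.of_apply, blockDiag2]
  rw [cperm_div, cperm_div]
  by_cases h : (i:ℕ)/2 = (j:ℕ)/2
  · rw [if_pos h, if_pos h]
    by_cases hm : (i:ℕ)/2 < m
    · rw [if_pos hm]
      have hi : (i:ℕ) < m*2 := by omega
      have hj : (j:ℕ) < m*2 := by omega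
      have ci : (cperm m i : ℕ) % 2 = (i:ℕ) % 2 := by rw [cperm_mod, if_pos hi]
      have cj : (cperm m j : ℕ) % 2 = (j:ℕ) % 2 := by rw [cperm_mod, if_pos hj]
      simp only [ci, cj]
    · rw [if_neg hm]
      have hi : ¬ (i:ℕ) < m*2 := by omega
      have hj : ¬ (j:ℕ) < m*2 := by have := j.2; omega
      have ci : (cperm m i : ℕ) % 2 = 1 - (i:ℕ) % 2 := by rw [cperm_mod, if_neg hi]
      have cj : (cperm m j : ℕ) % 2 = 1 - (j:ℕ) % 2 := by rw [cperm_mod, if_neg hj]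
      simp only [ci, cj, sigma_conj]
      have hi2 : (i:ℕ) % 2 = 0 ∨ (i:ℕ) % 2 = 1 := by omega
      have hj2 : (j:ℕ) % 2 = 0 ∨ (j:ℕ) % 2 = 1 := by omega
      rcases hi2 with hi2 | hi2 <;> rcases hj2 with hj2 | hj2 <;>
        simp [hi2, hj2, Fin.mk_zero, Fin.mk_one]
  · rw [if_neg h, if_neg h]

lemma Rrot_mul (R : ℝ → Matrix (Fin 2) (Fin 2) ℂ) (hR : R = RY ∨ R = RZ) (a b : ℝ) :
    R a * R b = R (a + b) := by
  rcases hR with h | h <;> subst h <;> ext i j <;> fin_cases i <;> fin_cases j <;>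
    simp [RY, RZ, Matrix.mul_apply, Fin.sum_univ_two, Matrix.vecMul, Matrix.vecHead,
      Matrix.vecTail, dotProduct, Real.cos_add, Real.sin_add, ← Complex.exp_add] <;>
    push_cast <;> ring_nf

lemma Rrot_conj (R : ℝ → Matrix (Fin 2) (Fin 2) ℂ) (hR : R = RY ∨ R = RZ) (a : ℝ) :
    !![(0:ℂ),1;1,0] * R a * !![(0:ℂ),1;1,0] = R (-a) := by
  rcases hR with h | h <;> subst h <;> ext i j <;> fin_cases i <;> fin_cases j <;>
    simp [RY, RZ, Matrix.mul_apply, Fin.sum_univ_two, Matrix.vecMul, Matrix.vecHead,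
      Matrix.vecTail, dotProduct, Real.cos_neg, Real.sin_neg]

end Aux

/-- Let `n ≥ 2`, `m = 2^(n-2)`, and let `R` be either `R_Y` or `R_Z`.  With
`F(θ) = blockdiag(R(θ_1), …, R(θ_m))` and `C` the CNOT gate with control on the first qubit
and target on the last qubit, for all `θ, φ`:
`C (I_2 ⊗ F(φ)) C (I_2 ⊗ F(θ)) = blockdiag(R(ψ_1), …, R(ψ_{2m}))`, where `ψ_j = θ_j + φ_j`
and `ψ_{m+j} = θ_j - φ_j` for `1 ≤ j ≤ m`. -/

theorem cnot_conj_multirot (n : ℕ) (hn : 2 ≤ n) (R : ℝ → Matrix (Fin 2) (Fin 2) ℂ)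
    (hR : R = RY ∨ R = RZ) (θ φ : ℕ → ℝ) :
    CNOTfl (2 ^ (n - 2)) * kronFirst 1 (blockDiag2 (2 ^ (n - 2)) fun j => R (φ j)) *
        CNOTfl (2 ^ (n - 2)) * kronFirst 1 (blockDiag2 (2 ^ (n - 2)) fun j => R (θ j)) =
      blockDiag2 (2 ^ (n - 2) * 2) fun j =>
        if j < 2 ^ (n - 2) then R (θ j + φ j)
        else R (θ (j - 2 ^ (n - 2)) - φ (j - 2 ^ (n - 2))) := by
  rw [kron_eq, kron_eq, cnot_conj, blockDiag2_mul]
  apply blockDiag2_congr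
  intro q hq
  by_cases h : q < 2 ^ (n - 2)
  · rw [if_pos h, if_pos h, Nat.mod_eq_of_lt h, Rrot_mul R hR, add_comm]
  · rw [if_neg h, if_neg h]
    have hqm : q % 2 ^ (n - 2) = q - 2 ^ (n - 2) := by
      rw [Nat.mod_eq_sub_mod (le_of_not_gt h), Nat.mod_eq_of_lt (by omega)]
    rw [hqm, Rrot_conj R hR, Rrot_mul R hR]
    congr 1
    ring
end

section
/- Let n ≥ 2 and let Λ ⊆ {1,…,n−1} be nonempty. Define T^o_Λ as the set of pairs (a,b) where a is an even integer in {2,4,…,2^n}, b = ((a−2) XOR mask_Λ) + 1, and a < b. Then: (i) T^o_Λ has exactly 2^{n−2} elements, in each pair a is even and b is odd, and the pairs are pairwise disjoint (each integer in {1,…,2^n} occurs in at most one pair of T^o_Λ); (ii) every pair (a,b) with 1 ≤ a < b ≤ 2^n, a even and b odd belongs to T^o_Λ for exactly one nonempty Λ ⊆ {1,…,n−1}; consequently, the permutations of {1,…,2^n} obtained as the product of the disjoint transpositions in T^o_Λ are pairwise distinct for distinct nonempty Λ. -/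
/-- `mask n Λ = Σ_{i ∈ Λ} 2^(n-i)`. -/
def mask (n : ℕ) (Λ : Finset ℕ) : ℕ := ∑ i ∈ Λ, 2 ^ (n - i)

/-- `To n Λ`: the pairs `(a, b)` with `a` even in `{2,4,…,2^n}`,
`b = ((a-2) XOR mask n Λ) + 1`, and `a < b`. -/
def To (n : ℕ) (Λ : Finset ℕ) : Finset (ℕ × ℕ) :=
  ((Finset.Icc 1 (2 ^ n)) ×ˢ (Finset.Icc 1 (2 ^ n))).filter
    fun p => p.1 % 2 = 0 ∧ p.2 = ((p.1 - 2) ^^^ mask n Λ) + 1 ∧ p.1 < p.2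


lemma sum_range_two_pow (n : ℕ) : ∑ i ∈ Finset.range n, 2 ^ i = 2 ^ n - 1 := by
  induction n with
  | zero => simp
  | succ k ih =>
    have h1 : 1 ≤ 2 ^ k := Nat.one_le_two_pow
    rw [Finset.sum_range_succ, ih, pow_succ]
    omega

lemma xor_even {x m : ℕ} (hx : x % 2 = 0) (hm : m % 2 = 0) : (x ^^^ m) % 2 = 0 := by
  have h := Nat.xor_mod_two_eq (m := x) (n := m)
  omega

lemma mask_eq (n : ℕ) {Λ : Finset ℕ} (hΛ : Λ ⊆ Finset.Icc 1 (n - 1)) :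
    ∑ j ∈ Λ.image (fun i => n - i), 2 ^ j = mask n Λ := by
  rw [mask, Finset.sum_image]
  intro x hx y hy h
  have hx' := Finset.mem_Icc.mp (hΛ hx)
  have hy' := Finset.mem_Icc.mp (hΛ hy)
  simp only at h
  omega

lemma image_sub_subset (n : ℕ) {S : Finset ℕ} (hS : S ⊆ Finset.Icc 1 (n - 1)) :
    S.image (fun i => n - i) ⊆ Finset.Icc 1 (n - 1) := by
  intro j hj
  obtain ⟨i, hi, rfl⟩ := Finset.mem_image.mp hj
  have := Finset.mem_Icc.mp (hS hi)
  simp only [Finset.mem_Icc]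
  omega

lemma image_image_sub (n : ℕ) {S : Finset ℕ} (hS : S ⊆ Finset.Icc 1 (n - 1)) :
    (S.image (fun i => n - i)).image (fun i => n - i) = S := by
  rw [Finset.image_image]
  have h : ∀ x ∈ S, ((fun i => n - i) ∘ (fun i => n - i)) x = id x := by
    intro x hx
    have := Finset.mem_Icc.mp (hS hx)
    simp only [Function.comp_apply, id_eq]
    omega
  rw [Finset.image_congr h, Finset.image_id]

lemma mask_injOn (n : ℕ) {Λ₁ Λ₂ : Finset ℕ} (h1 : Λ₁ ⊆ Finset.Icc 1 (n - 1))
    (h2 : Λ₂ ⊆ Finset.Icc 1 (n - 1)) (h : mask n Λ₁ = mask n Λ₂) : Λ₁ = Λ₂ := by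
  have e1 : (mask n Λ₁).bitIndices.toFinset = Λ₁.image (fun i => n - i) := by
    rw [← mask_eq n h1]; exact Finset.toFinset_bitIndices_twoPowSum _
  have e2 : (mask n Λ₂).bitIndices.toFinset = Λ₂.image (fun i => n - i) := by
    rw [← mask_eq n h2]; exact Finset.toFinset_bitIndices_twoPowSum _
  have himg : Λ₁.image (fun i => n - i) = Λ₂.image (fun i => n - i) := by
    rw [← e1, ← e2, h]
  calc Λ₁ = (Λ₁.image (fun i => n - i)).image (fun i => n - i) := (image_image_sub n h1).symm
    _ = (Λ₂.image (fun i => n - i)).image (fun i => n - i) := by rw [himg]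
    _ = Λ₂ := image_image_sub n h2

lemma mask_ge {n : ℕ} {Λ : Finset ℕ} (hΛ : Λ ⊆ Finset.Icc 1 (n - 1)) (hne : Λ.Nonempty) :
    2 ≤ mask n Λ := by
  obtain ⟨i, hi⟩ := hne
  have hii := Finset.mem_Icc.mp (hΛ hi)
  have h1 : 2 ^ (n - i) ≤ ∑ j ∈ Λ, 2 ^ (n - j) :=
    Finset.single_le_sum (f := fun j => 2 ^ (n - j)) (fun j _ => Nat.zero_le _) hi
  have h2 : (2:ℕ) ^ 1 ≤ 2 ^ (n - i) := Nat.pow_le_pow_right (by norm_num) (by omega)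
  rw [mask]
  simpa using h2.trans h1

lemma mask_lt {n : ℕ} {Λ : Finset ℕ} (hΛ : Λ ⊆ Finset.Icc 1 (n - 1)) :
    mask n Λ < 2 ^ n := by
  rw [← mask_eq n hΛ]
  have hsub : Λ.image (fun i => n - i) ⊆ Finset.range n := by
    intro j hj
    have := Finset.mem_Icc.mp (image_sub_subset n hΛ hj)
    simp only [Finset.mem_range]
    omega
  have h1 : ∑ j ∈ Λ.image (fun i => n - i), 2 ^ j ≤ ∑ j ∈ Finset.range n, 2 ^ j :=
    Finset.sum_le_sum_of_subset hsub
  rw [sum_range_two_pow] at h1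
  have h2 : 1 ≤ 2 ^ n := Nat.one_le_two_pow
  omega

lemma mask_even {n : ℕ} {Λ : Finset ℕ} (hΛ : Λ ⊆ Finset.Icc 1 (n - 1)) :
    mask n Λ % 2 = 0 := by
  have h : 2 ∣ mask n Λ := by
    refine Finset.dvd_sum fun i hi => ?_
    have := Finset.mem_Icc.mp (hΛ hi)
    exact dvd_pow_self 2 (by omega)
  omega


lemma To_eq (n : ℕ) (hn : 2 ≤ n) {Λ : Finset ℕ} (hΛ : Λ ⊆ Finset.Icc 1 (n - 1))
    (hne : Λ.Nonempty) :
    To n Λ = ((Finset.range (2 ^ n)).filter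
        (fun x => x % 2 = 0 ∧ x < x ^^^ mask n Λ)).image
      (fun x => (x + 2, (x ^^^ mask n Λ) + 1)) := by
  set m := mask n Λ with hm
  have hm2 : 2 ≤ m := mask_ge hΛ hne
  have hmlt : m < 2 ^ n := mask_lt hΛ
  have hme : m % 2 = 0 := mask_even hΛ
  have h2n : 2 ^ n = 2 * 2 ^ (n - 1) := by
    rw [← pow_succ']
    congr 1
    omega
  ext ⟨a, b⟩
  simp only [To, ← hm, Finset.mem_filter, Finset.mem_product, Finset.mem_Icc, Finset.mem_image,
    Finset.mem_range]
  constructor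
  · rintro ⟨⟨⟨ha1, ha2⟩, hb1, hb2⟩, hae, hbe, hab⟩
    refine ⟨a - 2, ⟨by omega, by omega, ?_⟩, ?_⟩
    · subst hbe; omega
    · have h : a - 2 + 2 = a := by omega
      rw [h, hbe]
  · rintro ⟨x, ⟨hxlt, hxe, hxy⟩, heq⟩
    obtain ⟨rfl, rfl⟩ : a = x + 2 ∧ b = (x ^^^ m) + 1 := by
      cases heq; exact ⟨rfl, rfl⟩
    have hy_lt : x ^^^ m < 2 ^ n := Nat.xor_lt_two_pow hxlt hmlt
    have hy_e : (x ^^^ m) % 2 = 0 := xor_even hxe hme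
    refine ⟨⟨⟨by omega, by omega⟩, by omega, by omega⟩, by omega, by simp, by omega⟩

lemma card_L (n : ℕ) (hn : 2 ≤ n) {m : ℕ} (hm0 : m ≠ 0) (hme : m % 2 = 0)
    (hmlt : m < 2 ^ n) :
    ((Finset.range (2 ^ n)).filter (fun x => x % 2 = 0 ∧ x < x ^^^ m)).card = 2 ^ (n - 2) := by
  have h2n : 2 ^ n = 2 * 2 ^ (n - 1) := by rw [← pow_succ']; congr 1; omega
  have h2n' : 2 ^ (n - 1) = 2 * 2 ^ (n - 2) := by rw [← pow_succ']; congr 1; omega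
  have hxne : ∀ x : ℕ, x ^^^ m ≠ x := by
    intro x h
    apply hm0
    have h' : x ^^^ m = x ^^^ 0 := by rw [Nat.xor_zero]; exact h
    exact Nat.xor_right_injective h'
  set E := (Finset.range (2 ^ n)).filter (fun x => x % 2 = 0) with hE
  have hEcard : E.card = 2 ^ (n - 1) := by
    have himg : E = (Finset.range (2 ^ (n - 1))).image (fun j => 2 * j) := by
      ext x
      simp only [hE, Finset.mem_filter, Finset.mem_range, Finset.mem_image]
      constructor
      · rintro ⟨h1, h2⟩; exact ⟨x / 2, by omega, by omega⟩
      · rintro ⟨j, hj, rfl⟩; omega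
    rw [himg, Finset.card_image_of_injective _ (fun a b h => by omega), Finset.card_range]
  have hLG : (E.filter (fun x => x < x ^^^ m)).card
      = (E.filter (fun x => x ^^^ m < x)).card := by
    refine Finset.card_nbij' (fun x => x ^^^ m) (fun x => x ^^^ m) ?_ ?_ ?_ ?_
    · intro x hx
      simp only [hE, Finset.mem_coe, Finset.mem_filter, Finset.mem_range] at hx ⊢
      refine ⟨⟨Nat.xor_lt_two_pow hx.1.1 hmlt, xor_even hx.1.2 hme⟩, ?_⟩
      rw [xor_cancel_right]
      exact hx.2
    · intro x hx
      simp only [hE, Finset.mem_coe, Finset.mem_filter, Finset.mem_range] at hx ⊢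
      refine ⟨⟨Nat.xor_lt_two_pow hx.1.1 hmlt, xor_even hx.1.2 hme⟩, ?_⟩
      rw [xor_cancel_right]
      exact hx.2
    · intro x _; exact xor_cancel_right x m
    · intro x _; exact xor_cancel_right x m
  have hsplit : (E.filter (fun x => x < x ^^^ m)).card
      + (E.filter (fun x => ¬ (x < x ^^^ m))).card = E.card :=
    Finset.card_filter_add_card_filter_not _
  have hGeq : E.filter (fun x => ¬ (x < x ^^^ m)) = E.filter (fun x => x ^^^ m < x) := by
    apply Finset.filter_congr
    intro x _
    have := hxne x
    constructor
    · intro h; omega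
    · intro h; omega
  rw [hGeq, ← hLG] at hsplit
  have hfinal : ((Finset.range (2 ^ n)).filter (fun x => x % 2 = 0 ∧ x < x ^^^ m))
      = E.filter (fun x => x < x ^^^ m) := by
    rw [hE, Finset.filter_filter]
  rw [hfinal]
  omega

lemma To_props (n : ℕ) (hn : 2 ≤ n) {Λ : Finset ℕ} (hΛ : Λ ⊆ Finset.Icc 1 (n - 1))
    (hne : Λ.Nonempty) :
    (To n Λ).card = 2 ^ (n - 2) ∧
      (∀ p ∈ To n Λ, p.1 % 2 = 0 ∧ p.2 % 2 = 1) ∧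
      (∀ p ∈ To n Λ, ∀ q ∈ To n Λ, p ≠ q →
        p.1 ≠ q.1 ∧ p.1 ≠ q.2 ∧ p.2 ≠ q.1 ∧ p.2 ≠ q.2) := by
  have hm2 : 2 ≤ mask n Λ := mask_ge hΛ hne
  have hmlt : mask n Λ < 2 ^ n := mask_lt hΛ
  have hme : mask n Λ % 2 = 0 := mask_even hΛ
  have hinj : Function.Injective (fun x => (x + 2, (x ^^^ mask n Λ) + 1)) := by
    intro x y h
    have := congrArg Prod.fst h
    simpa using this
  rw [To_eq n hn hΛ hne]
  refine ⟨?_, ?_, ?_⟩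
  · rw [Finset.card_image_of_injective _ hinj]
    exact card_L n hn (by omega) hme hmlt
  · intro p hp
    obtain ⟨x, hx, rfl⟩ := Finset.mem_image.mp hp
    simp only [Finset.mem_filter, Finset.mem_range] at hx
    have := xor_even hx.2.1 hme
    constructor <;> simp <;> omega
  · intro p hp q hq hpq
    obtain ⟨x, hx, rfl⟩ := Finset.mem_image.mp hp
    obtain ⟨y, hy, rfl⟩ := Finset.mem_image.mp hq
    simp only [Finset.mem_filter, Finset.mem_range] at hx hy
    have hxy : x ≠ y := fun h => hpq (by rw [h])
    have hx' := xor_even hx.2.1 hme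
    have hy' := xor_even hy.2.1 hme
    have hxor : x ^^^ mask n Λ ≠ y ^^^ mask n Λ := fun h => hxy (Nat.xor_left_injective h)
    refine ⟨by omega, by omega, by omega, by omega⟩

lemma To_mem_two (n : ℕ) (hn : 2 ≤ n) {Λ : Finset ℕ} (hΛ : Λ ⊆ Finset.Icc 1 (n - 1))
    (hne : Λ.Nonempty) : (2, mask n Λ + 1) ∈ To n Λ := by
  have hm2 : 2 ≤ mask n Λ := mask_ge hΛ hne
  rw [To_eq n hn hΛ hne]
  apply Finset.mem_image.mpr
  refine ⟨0, ?_, by simp⟩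
  rw [Finset.mem_filter, Finset.mem_range]
  exact ⟨Nat.pow_pos (by norm_num), rfl, by rw [Nat.zero_xor]; omega⟩

lemma To_unique (n : ℕ) (hn : 2 ≤ n) (a b : ℕ) (ha1 : 1 ≤ a) (hab : a < b)
    (hb : b ≤ 2 ^ n) (hae : a % 2 = 0) (hbe : b % 2 = 1) :
    ∃! Λ : Finset ℕ, Λ ⊆ Finset.Icc 1 (n - 1) ∧ Λ.Nonempty ∧ (a, b) ∈ To n Λ := by
  have ha2 : 2 ≤ a := by omega
  set m := (a - 2) ^^^ (b - 1) with hmdef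
  have hm0 : m ≠ 0 := mt xor_eq_zero_iff.mp (by omega)
  have hme : m % 2 = 0 := xor_even (by omega) (by omega)
  have hmlt : m < 2 ^ n :=
    Nat.xor_lt_two_pow (by omega : a - 2 < 2 ^ n) (by omega : b - 1 < 2 ^ n)
  set S := m.bitIndices.toFinset with hSdef
  have hS : S ⊆ Finset.Icc 1 (n - 1) := by
    intro j hj
    rw [hSdef, List.mem_toFinset] at hj
    have h2j : 2 ^ j ≤ m := Nat.two_pow_le_of_mem_bitIndices hj
    have hjn : j < n := by
      by_contra hcon
      have : 2 ^ n ≤ 2 ^ j := Nat.pow_le_pow_right (by norm_num) (by omega)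
      omega
    have hj1 : 1 ≤ j := by
      have hm2 : m = 2 * (m / 2) := by omega
      rw [hm2, Nat.bitIndices_two_mul] at hj
      obtain ⟨i, _, rfl⟩ := List.mem_map.mp hj
      omega
    rw [Finset.mem_Icc]
    omega
  have hsum : ∑ i ∈ S, 2 ^ i = m := Finset.twoPowSum_toFinset_bitIndices m
  have hSne : S.Nonempty := by
    rw [Finset.nonempty_iff_ne_empty]
    intro h
    rw [h, Finset.sum_empty] at hsum
    exact hm0 hsum.symm
  set Λ₀ := S.image (fun i => n - i) with hΛ₀def
  have hΛ₀sub : Λ₀ ⊆ Finset.Icc 1 (n - 1) := image_sub_subset n hS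
  have hΛ₀ne : Λ₀.Nonempty := hSne.image _
  have hmask : mask n Λ₀ = m := by
    rw [← mask_eq n hΛ₀sub, hΛ₀def, image_image_sub n hS, hsum]
  have hbval : ((a - 2) ^^^ m) + 1 = b := by
    rw [hmdef, xor_cancel_left]
    omega
  refine ⟨Λ₀, ⟨hΛ₀sub, hΛ₀ne, ?_⟩, ?_⟩
  · rw [To, Finset.mem_filter, Finset.mem_product]
    refine ⟨⟨?_, ?_⟩, hae, ?_, hab⟩
    · rw [Finset.mem_Icc]; omega
    · rw [Finset.mem_Icc]; omega
    · rw [hmask, hbval]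
  · rintro Λ' ⟨hsub', _, hmem'⟩
    rw [To, Finset.mem_filter] at hmem'
    obtain ⟨_, _, hbeq', _⟩ := hmem'
    have hbeq2 : b = ((a - 2) ^^^ mask n Λ') + 1 := hbeq'
    have hmask' : mask n Λ' = m := by
      have h1 : (a - 2) ^^^ mask n Λ' = b - 1 := by omega
      have : (a - 2) ^^^ ((a - 2) ^^^ mask n Λ') = (a - 2) ^^^ (b - 1) := by rw [h1]
      rwa [xor_cancel_left] at this
    exact mask_injOn n hsub' hΛ₀sub (by rw [hmask', hmask])

lemma prod_swap_fixed (l : List (ℕ × ℕ)) (x : ℕ) (h : ∀ p ∈ l, x ≠ p.1 ∧ x ≠ p.2) :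
    (l.map fun p => Equiv.swap p.1 p.2).prod x = x := by
  induction l with
  | nil => simp
  | cons p t ih =>
    simp only [List.map_cons, List.prod_cons, Equiv.Perm.mul_apply]
    rw [ih (fun q hq => h q (List.mem_cons_of_mem _ hq))]
    exact Equiv.swap_apply_of_ne_of_ne (h p (List.mem_cons_self)).1
      (h p (List.mem_cons_self)).2

lemma prod_swap_apply (l : List (ℕ × ℕ)) (hnd : l.Nodup) (a b : ℕ) (hmem : (a, b) ∈ l)
    (hdisj : ∀ q ∈ l, q ≠ (a, b) → a ≠ q.1 ∧ a ≠ q.2 ∧ b ≠ q.1 ∧ b ≠ q.2) :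
    (l.map fun p => Equiv.swap p.1 p.2).prod a = b := by
  induction l with
  | nil => simp at hmem
  | cons p t ih =>
    simp only [List.map_cons, List.prod_cons, Equiv.Perm.mul_apply]
    rcases List.mem_cons.mp hmem with h | h
    · subst h
      have hfix : (t.map fun p => Equiv.swap p.1 p.2).prod a = a := by
        apply prod_swap_fixed
        intro q hq
        have hqp : q ≠ (a, b) := by
          rintro rfl
          exact (List.nodup_cons.mp hnd).1 hq
        have hd := hdisj q (List.mem_cons_of_mem _ hq) hqp
        exact ⟨hd.1, hd.2.1⟩
      rw [hfix]
      exact Equiv.swap_apply_left a b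
    · have hp : p ≠ (a, b) := by
        rintro rfl
        exact (List.nodup_cons.mp hnd).1 h
      rw [ih (List.nodup_cons.mp hnd).2 h
        (fun q hq hq' => hdisj q (List.mem_cons_of_mem _ hq) hq')]
      have hd := hdisj p (List.mem_cons_self) hp
      exact Equiv.swap_apply_of_ne_of_ne hd.2.2.1 hd.2.2.2

/-- Let `n ≥ 2` and `Λ ⊆ {1,…,n-1}` be nonempty.  Then (i) `T^o_Λ` has
exactly `2^(n-2)` elements, in each pair `a` is even and `b` is odd, and the pairs are
pairwise disjoint; (ii) every pair `(a,b)` with `1 ≤ a < b ≤ 2^n`, `a` even and `b` odd,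
belongs to `T^o_Λ` for exactly one nonempty `Λ ⊆ {1,…,n-1}`; hence (iii) the permutations of
`{1,…,2^n}` obtained as products of the disjoint transpositions in `T^o_Λ` are pairwise
distinct for distinct nonempty `Λ`. -/
theorem To_pairing (n : ℕ) (hn : 2 ≤ n) :
    (∀ Λ : Finset ℕ, Λ ⊆ Finset.Icc 1 (n - 1) → Λ.Nonempty →
      (To n Λ).card = 2 ^ (n - 2) ∧
      (∀ p ∈ To n Λ, p.1 % 2 = 0 ∧ p.2 % 2 = 1) ∧
      (∀ p ∈ To n Λ, ∀ q ∈ To n Λ, p ≠ q →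
        p.1 ≠ q.1 ∧ p.1 ≠ q.2 ∧ p.2 ≠ q.1 ∧ p.2 ≠ q.2)) ∧
    (∀ a b : ℕ, 1 ≤ a → a < b → b ≤ 2 ^ n → a % 2 = 0 → b % 2 = 1 →
      ∃! Λ : Finset ℕ, Λ ⊆ Finset.Icc 1 (n - 1) ∧ Λ.Nonempty ∧ (a, b) ∈ To n Λ) ∧
    (∀ Λ₁ Λ₂ : Finset ℕ, Λ₁ ⊆ Finset.Icc 1 (n - 1) → Λ₁.Nonempty →
      Λ₂ ⊆ Finset.Icc 1 (n - 1) → Λ₂.Nonempty → Λ₁ ≠ Λ₂ →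
      ∀ l₁ l₂ : List (ℕ × ℕ), l₁.Nodup → l₁.toFinset = To n Λ₁ →
        l₂.Nodup → l₂.toFinset = To n Λ₂ →
        (l₁.map fun p => Equiv.swap p.1 p.2).prod ≠
          (l₂.map fun p => Equiv.swap p.1 p.2).prod) := by
  refine ⟨fun Λ hΛ hne => To_props n hn hΛ hne,
    fun a b ha hab hb hae hbe => To_unique n hn a b ha hab hb hae hbe, ?_⟩
  intro Λ₁ Λ₂ h1 hne1 h2 hne2 hΛne l₁ l₂ hnd1 ht1 hnd2 ht2 heq
  have hm1 := To_mem_two n hn h1 hne1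
  have hm2 := To_mem_two n hn h2 hne2
  have hd1 := (To_props n hn h1 hne1).2.2
  have hd2 := (To_props n hn h2 hne2).2.2
  have hp1 : (l₁.map fun p => Equiv.swap p.1 p.2).prod 2 = mask n Λ₁ + 1 := by
    apply prod_swap_apply l₁ hnd1 2 (mask n Λ₁ + 1)
    · rw [← List.mem_toFinset, ht1]; exact hm1
    · intro q hq hq'
      have hqTo : q ∈ To n Λ₁ := by rw [← ht1]; exact List.mem_toFinset.mpr hq
      exact hd1 (2, mask n Λ₁ + 1) hm1 q hqTo (fun h => hq' h.symm)
  have hp2 : (l₂.map fun p => Equiv.swap p.1 p.2).prod 2 = mask n Λ₂ + 1 := by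
    apply prod_swap_apply l₂ hnd2 2 (mask n Λ₂ + 1)
    · rw [← List.mem_toFinset, ht2]; exact hm2
    · intro q hq hq'
      have hqTo : q ∈ To n Λ₂ := by rw [← ht2]; exact List.mem_toFinset.mpr hq
      exact hd2 (2, mask n Λ₂ + 1) hm2 q hqTo (fun h => hq' h.symm)
  have hmm : mask n Λ₁ + 1 = mask n Λ₂ + 1 := by rw [← hp1, ← hp2, heq]
  exact hΛne (mask_injOn n h1 h2 (by omega))
end
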